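/- Let X = {x₁, …, x_l} and Y = {−y₁, …, −y_m} be disjoint nonempty sets of even integers, where x₁ > ⋯ > x_l are non-negative even integers and y₁ < ⋯ < y_m are positive even integers, with X ∪ Y ≠ {0}. Let L = x₁ + ⋯ + x_l, M = y₁ + ⋯ + y_m and n = lM + mL. If there exist x_p ∈ X and (not necessarily distinct) −y_q, −y_r ∈ Y such that x_p = y_q + y_r, then there exists a tournament of order n + 3 whose imbalance set is X ∪ Y. -/

import Mathlib

/-- A tournament on `Fin n`: loopless, and between any two distinct vertices
there is exactly one arc. -/
def IsTournament {n : ℕ} (r : Fin n → Fin n → Bool) : Prop :=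
  (∀ i, r i i = false) ∧ ∀ i j : Fin n, i ≠ j → (r i j = !(r j i))

/-- The score (outdegree) of vertex `i`. -/
def outdeg {n : ℕ} (r : Fin n → Fin n → Bool) (i : Fin n) : ℕ :=
  (Finset.univ.filter fun j => r i j = true).card

/-- The indegree of vertex `i`. -/
def indeg {n : ℕ} (r : Fin n → Fin n → Bool) (i : Fin n) : ℕ :=
  (Finset.univ.filter fun j => r j i = true).card

/-- The imbalance of vertex `i`: outdegree minus indegree. -/
def imbalance {n : ℕ} (r : Fin n → Fin n → Bool) (i : Fin n) : ℤ :=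
  (outdeg r i : ℤ) - (indeg r i : ℤ)

/-- The imbalance set of a digraph. -/
def imbalanceSet {n : ℕ} (r : Fin n → Fin n → Bool) : Finset ℤ :=
  Finset.image (imbalance r) Finset.univ

namespace TournAux

variable {N : ℕ}

/-- arc contribution -/
def eterm (r : Fin N → Fin N → Bool) (i j : Fin N) : ℤ :=
  (if r i j then 1 else 0) - (if r j i then 1 else 0)

lemma imbalance_eq_sum (r : Fin N → Fin N → Bool) (i : Fin N) :
    imbalance r i = ∑ j, eterm r i j := by
  unfold imbalance outdeg indeg eterm
  rw [Finset.sum_sub_distrib]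
  push_cast [Finset.card_filter]
  simp

lemma eterm_antisymm (r : Fin N → Fin N → Bool) (i j : Fin N) :
    eterm r i j = - eterm r j i := by
  unfold eterm; ring

lemma eterm_self (hr : IsTournament r) (i : Fin N) : eterm r i i = 0 := by
  unfold eterm; simp [hr.1 i]

lemma sum_eterm_square (r : Fin N → Fin N → Bool) (S : Finset (Fin N)) :
    ∑ i ∈ S, ∑ j ∈ S, eterm r i j = 0 := by
  have h : ∑ i ∈ S, ∑ j ∈ S, eterm r i j = ∑ j ∈ S, ∑ i ∈ S, eterm r i j :=
    Finset.sum_comm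
  have h2 : ∑ j ∈ S, ∑ i ∈ S, eterm r i j = -∑ j ∈ S, ∑ i ∈ S, eterm r j i := by
    rw [← Finset.sum_neg_distrib]
    refine Finset.sum_congr rfl fun j _ => ?_
    rw [← Finset.sum_neg_distrib]
    refine Finset.sum_congr rfl fun i _ => ?_
    rw [eterm_antisymm]
  have h3 : ∑ j ∈ S, ∑ i ∈ S, eterm r j i = ∑ i ∈ S, ∑ j ∈ S, eterm r i j := rfl
  omega

lemma sum_imbalance (r : Fin N → Fin N → Bool) :
    ∑ i, imbalance r i = 0 := by
  simp only [imbalance_eq_sum]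
  exact sum_eterm_square r Finset.univ

end TournAux

namespace TournAux
variable {N : ℕ}

def flip (r : Fin N → Fin N → Bool) (a b : Fin N) : Fin N → Fin N → Bool :=
  fun i j => if i = a ∧ j = b then false else if i = b ∧ j = a then true else r i j

lemma flip_isTournament {r : Fin N → Fin N → Bool} (hr : IsTournament r)
    {a b : Fin N} (hab : a ≠ b) : IsTournament (flip r a b) := by
  constructor
  · intro i
    unfold flip
    have h1 : ¬ (i = a ∧ i = b) := by rintro ⟨rfl, rfl⟩; exact hab rfl
    have h2 : ¬ (i = b ∧ i = a) := by rintro ⟨rfl, rfl⟩; exact hab rfl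
    simp [h1, h2, hr.1 i]
  · intro i j hij
    have h0 := hr.2 i j hij
    unfold flip
    by_cases hia : i = a <;> by_cases hjb : j = b <;> by_cases hib : i = b <;>
      by_cases hja : j = a <;> simp_all

lemma flip_imbalance {r : Fin N → Fin N → Bool} (hr : IsTournament r)
    {a b : Fin N} (hab : a ≠ b) (hrab : r a b = true) (i : Fin N) :
    imbalance (flip r a b) i =
      imbalance r i + (if i = b then 2 else 0) - (if i = a then 2 else 0) := by
  have hba : r b a = false := by
    have := hr.2 a b hab
    rw [hrab] at this
    simpa using this.symm
  have key : ∀ j, eterm (flip r a b) i j =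
      eterm r i j + (if i = b ∧ j = a then 2 else 0) - (if i = a ∧ j = b then 2 else 0) := by
    intro j
    unfold eterm flip
    by_cases hia : i = a <;> by_cases hjb : j = b <;> by_cases hib : i = b <;>
      by_cases hja : j = a <;> simp_all <;> ring
  rw [imbalance_eq_sum, imbalance_eq_sum]
  simp only [key]
  rw [Finset.sum_sub_distrib, Finset.sum_add_distrib]
  congr 1
  · congr 1
    by_cases hib : i = b
    · subst hib
      rw [Finset.sum_eq_single_of_mem a (Finset.mem_univ a)]
      · simp
      · intro j _ hj; simp [hj]
    · simp [hib]
  · by_cases hia : i = a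
    · subst hia
      rw [Finset.sum_eq_single_of_mem b (Finset.mem_univ b)]
      · simp
      · intro j _ hj; simp [hj]
    · simp [hia]

end TournAux

namespace TournAux
variable {N : ℕ}

lemma chain'_congr_mem {α : Type*} {R S : α → α → Prop} :
    ∀ {l : List α}, (∀ a ∈ l, ∀ b ∈ l, R a b → S a b) → l.Chain' R → l.Chain' S
  | [], _, _ => List.isChain_nil
  | [_], _, _ => List.isChain_singleton _
  | a :: b :: t, h, hc => by
    simp only [List.Chain', List.isChain_cons_cons] at hc ⊢
    exact ⟨h a (by simp) b (by simp) hc.1,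
      chain'_congr_mem (fun x hx y hy hr => h x (by simp [hx]) y (by simp [hy]) hr) hc.2⟩

lemma chain_flip : ∀ (k : ℕ) (l : List (Fin N)) (r : Fin N → Fin N → Bool),
    l.length ≤ k → IsTournament r → l.Chain' (fun a b => r a b = true) →
    ∀ v u : Fin N, l.head? = some v → l.getLast? = some u → v ≠ u →
    ∃ r', IsTournament r' ∧ ∀ i, imbalance r' i =
      imbalance r i + (if i = u then 2 else 0) - (if i = v then 2 else 0) := by
  intro k
  induction k with
  | zero =>
    intro l r hlen _ _ v u hh _ _
    rw [List.length_eq_zero_iff.mp (Nat.le_zero.mp hlen)] at hh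
    simp at hh
  | succ k ih =>
    intro l r hlen hr hchain v u hh hlast hvu
    cases l with
    | nil => simp at hh
    | cons a rest =>
      have hav : a = v := by simpa using hh
      subst hav
      cases rest with
      | nil => simp at hlast; exact absurd hlast hvu
      | cons w rest₂ =>
        have hvw : r a w = true := (List.isChain_cons_cons.mp hchain).1
        have hchain₂ : (w :: rest₂).Chain' (fun x y => r x y = true) :=
          (List.isChain_cons_cons.mp hchain).2
        have hlast₂ : (w :: rest₂).getLast? = some u := by
          rw [List.getLast?_cons_cons] at hlast; exact hlast
        have hwv : w ≠ a := by
          rintro rfl; rw [hr.1 w] at hvw; exact absurd hvw (by simp)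
        have hlen₂ : (w :: rest₂).length ≤ k := by
          simp only [List.length_cons] at hlen ⊢; omega
        by_cases hvmem : a ∈ w :: rest₂
        · obtain ⟨pre, suf, hsplit⟩ := List.append_of_mem hvmem
          have hsuffix : (a :: suf) <:+ (w :: rest₂) := ⟨pre, hsplit.symm⟩
          have hchain' : (a :: suf).Chain' (fun x y => r x y = true) :=
            hchain₂.suffix hsuffix
          have hlen' : (a :: suf).length ≤ k :=
            le_trans hsuffix.length_le hlen₂
          have hlast' : (a :: suf).getLast? = some u := by
            cases suf with
            | nil =>
              exfalso
              rw [hsplit] at hlast₂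
              rw [List.getLast?_concat] at hlast₂
              exact hvu (by simpa using hlast₂)
            | cons s ss =>
              rw [hsplit] at hlast₂
              rwa [List.getLast?_append_cons] at hlast₂
          exact ih (a :: suf) r hlen' hr hchain' a u rfl hlast' hvu
        · by_cases hwu : w = u
          · subst hwu
            refine ⟨flip r a w, flip_isTournament hr hwv.symm, fun i => ?_⟩
            exact flip_imbalance hr hwv.symm hvw i
          · have hr1 : IsTournament (flip r a w) := flip_isTournament hr hwv.symm
            have hchain1 : (w :: rest₂).Chain' (fun x y => flip r a w x y = true) := by
              refine chain'_congr_mem (fun x hx y hy hxy => ?_) hchain₂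
              have hxa : x ≠ a := fun h => hvmem (h ▸ hx)
              have hya : y ≠ a := fun h => hvmem (h ▸ hy)
              unfold flip
              simp [hxa, hya, hxy]
            obtain ⟨r2, hr2, himb2⟩ :=
              ih (w :: rest₂) (flip r a w) hlen₂ hr1 hchain1 w u rfl hlast₂ hwu
            refine ⟨r2, hr2, fun i => ?_⟩
            have h1 := flip_imbalance hr hwv.symm hvw i
            have h2 := himb2 i
            rw [h2, h1]
            by_cases h3 : i = u <;> by_cases h4 : i = a <;> by_cases h5 : i = w <;>
              simp_all <;> ring

end TournAux

namespace TournAux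
variable {N : ℕ}

lemma reach_chain {α : Type*} {R : α → α → Prop} {v u : α}
    (h : Relation.ReflTransGen R v u) :
    ∃ l : List α, l.Chain' R ∧ l.head? = some v ∧ l.getLast? = some u := by
  induction h with
  | refl => exact ⟨[v], List.isChain_singleton v, rfl, rfl⟩
  | tail _ hbc ih =>
    obtain ⟨l, hc, hh, hl⟩ := ih
    cases l with
    | nil => simp at hh
    | cons a t =>
      refine ⟨(a :: t) ++ [_], ?_, by simpa using hh, by rw [List.getLast?_concat]⟩
      simp only [List.Chain', List.isChain_append]
      refine ⟨hc, List.isChain_singleton _, fun x hx y hy => ?_⟩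
      simp only [List.head?_cons, Option.mem_def, Option.some.injEq] at hy
      rw [hl] at hx
      simp only [Option.mem_def, Option.some.injEq] at hx
      subst hx; subst hy; exact hbc

lemma exists_path_flip {r : Fin N → Fin N → Bool} (hr : IsTournament r) {v u : Fin N}
    (hreach : Relation.ReflTransGen (fun a b => r a b = true) v u) (hvu : v ≠ u) :
    ∃ r', IsTournament r' ∧ ∀ i, imbalance r' i =
      imbalance r i + (if i = u then 2 else 0) - (if i = v then 2 else 0) := by
  obtain ⟨l, hc, hh, hl⟩ := reach_chain hreach
  exact chain_flip l.length l r le_rfl hr hc v u hh hl hvu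

lemma outdeg_add_indeg {r : Fin N → Fin N → Bool} (hr : IsTournament r) (i : Fin N) :
    outdeg r i + indeg r i = N - 1 := by
  have key : ∀ j, ((r i j = true) ∨ (r j i = true)) ↔ j ≠ i := by
    intro j
    constructor
    · rintro (hj | hj) h <;> subst h <;> rw [hr.1] at hj <;> simp at hj
    · intro hj
      have h2 := hr.2 i j (Ne.symm hj)
      cases hij : r j i
      · left; rw [h2, hij]; rfl
      · right; rfl
  unfold outdeg indeg
  rw [← Finset.card_union_of_disjoint]
  · have huni : (Finset.univ.filter fun j => r i j = true) ∪
        (Finset.univ.filter fun j => r j i = true) = Finset.univ \ {i} := by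
      ext j
      simp only [Finset.mem_union, Finset.mem_filter, Finset.mem_univ, true_and,
        Finset.mem_sdiff, Finset.mem_singleton]
      exact key j
    rw [huni, Finset.card_sdiff_of_subset (by simp)]
    simp
  · rw [Finset.disjoint_left]
    intro j hj1 hj2
    simp only [Finset.mem_filter, Finset.mem_univ, true_and] at hj1 hj2
    have hji : j ≠ i := (key j).mp (Or.inl hj1)
    have h2 := hr.2 i j (Ne.symm hji)
    rw [hj1, hj2] at h2
    simp at h2

lemma even_imbalance {r : Fin N → Fin N → Bool} (hr : IsTournament r) (hN : Odd N)
    (i : Fin N) : Even (imbalance r i) := by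
  have h1 := outdeg_add_indeg hr i
  have hN1 : 1 ≤ N := hN.pos
  have h2 : (outdeg r i : ℤ) + (indeg r i : ℤ) = (N : ℤ) - 1 := by
    push_cast [← h1]; omega
  obtain ⟨c, hc⟩ := hN
  refine ⟨(outdeg r i : ℤ) - c, ?_⟩
  unfold imbalance
  have : (N : ℤ) = 2 * c + 1 := by push_cast [hc]; ring
  linarith

end TournAux

namespace TournAux

section Regular
variable {N : ℕ} [NeZero N]

def reg : Fin N → Fin N → Bool :=
  fun i j => decide (0 < (j - i).val ∧ 2 * (j - i).val < N)

lemma val_neg_of_ne_zero {x : Fin N} (hx : x ≠ 0) : (-x).val = N - x.val := by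
  have h0 : (-x) + x = 0 := neg_add_cancel x
  have h1 : ((-x) + x).val = 0 := by rw [h0]; simp
  rw [Fin.val_add] at h1
  have h2 : (-x).val < N := (-x).isLt
  have h3 : x.val < N := x.isLt
  have h4 : x.val ≠ 0 := fun h => hx (Fin.ext h)
  have h5 : (-x).val ≠ 0 := by
    intro h
    have : (-x) = 0 := Fin.ext (by simpa using h)
    exact hx (neg_eq_zero.mp this)
  have h6 : N ∣ (-x).val + x.val := Nat.dvd_of_mod_eq_zero h1
  obtain ⟨k, hk⟩ := h6
  have hN0 : 0 < N := Nat.pos_of_ne_zero (NeZero.ne N)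
  have hk2 : k < 2 := by
    by_contra hge
    push_neg at hge
    have : N * 2 ≤ N * k := Nat.mul_le_mul_left N hge
    omega
  interval_cases k
  · omega
  · omega

lemma reg_isTournament (hN : Odd N) : IsTournament (reg (N := N)) := by
  constructor
  · intro i; simp [reg]
  · intro i j hij
    have hsub : j - i ≠ 0 := sub_ne_zero_of_ne (Ne.symm hij)
    have hsub' : i - j ≠ 0 := sub_ne_zero_of_ne hij
    have hneg : i - j = -(j - i) := (neg_sub j i).symm
    have hval : (i - j).val = N - (j - i).val := by
      rw [hneg]; exact val_neg_of_ne_zero hsub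
    have h1 : 0 < (j - i).val := Nat.pos_of_ne_zero (fun h => hsub (Fin.ext (by simpa using h)))
    have h2 : (j - i).val < N := (j - i).isLt
    have hNmod : N % 2 = 1 := Nat.odd_iff.mp hN
    by_cases hc : 2 * (j - i).val < N
    · have e1 : reg i j = true := by
        simp only [reg, decide_eq_true_eq]; exact ⟨h1, hc⟩
      have e2 : reg j i = false := by
        simp only [reg, hval, decide_eq_false_iff_not]; omega
      rw [e1, e2]; rfl
    · have e1 : reg i j = false := by
        simp only [reg, decide_eq_false_iff_not]; omega
      have e2 : reg j i = true := by
        simp only [reg, hval, decide_eq_true_eq]; omega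
      rw [e1, e2]; rfl

lemma reg_imbalance (hN : Odd N) (i : Fin N) : imbalance (reg (N := N)) i = 0 := by
  have hout : outdeg (reg (N := N)) i =
      (Finset.univ.filter fun d : Fin N => 0 < d.val ∧ 2 * d.val < N).card := by
    unfold outdeg
    apply Finset.card_bij (fun j _ => j - i)
    · intro j hj
      simp only [Finset.mem_filter, Finset.mem_univ, true_and, reg,
        decide_eq_true_eq] at hj ⊢
      exact hj
    · intro a ha b hb hab
      have : a - i + i = b - i + i := by rw [hab]
      simpa using this
    · intro d hd
      exact ⟨d + i, by
        simp only [Finset.mem_filter, Finset.mem_univ, true_and, reg,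
          decide_eq_true_eq, add_sub_cancel_right] at hd ⊢
        exact hd, by simp⟩
  have hin : indeg (reg (N := N)) i =
      (Finset.univ.filter fun d : Fin N => 0 < d.val ∧ 2 * d.val < N).card := by
    unfold indeg
    apply Finset.card_bij (fun j _ => i - j)
    · intro j hj
      simp only [Finset.mem_filter, Finset.mem_univ, true_and, reg,
        decide_eq_true_eq] at hj ⊢
      exact hj
    · intro a ha b hb hab
      have : i - (i - a) = i - (i - b) := by rw [hab]
      simpa using this
    · intro d hd
      exact ⟨i - d, by
        simp only [Finset.mem_filter, Finset.mem_univ, true_and, reg,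
          decide_eq_true_eq, sub_sub_cancel] at hd ⊢
        exact hd, by simp⟩
  unfold imbalance
  rw [hout, hin]
  ring

end Regular
end TournAux

namespace TournAux

theorem realize {N : ℕ} (hN : Odd N) (t : Fin N → ℤ) (heven : ∀ i, Even (t i))
    (hsum : ∑ i, t i = 0)
    (hcond : ∀ S : Finset (Fin N), ∑ i ∈ S, t i ≤ (S.card : ℤ) * ((N : ℤ) - S.card)) :
    ∃ r, IsTournament r ∧ ∀ i, imbalance r i = t i := by
  classical
  haveI : NeZero N := ⟨hN.pos.ne'⟩
  suffices H : ∀ k (r : Fin N → Fin N → Bool), IsTournament r →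
      (∑ i, (t i - imbalance r i).toNat) ≤ k →
      ∃ r', IsTournament r' ∧ ∀ i, imbalance r' i = t i by
    exact H _ reg (reg_isTournament hN) le_rfl
  intro k
  induction k with
  | zero =>
    intro r hr hΦ
    refine ⟨r, hr, fun i => ?_⟩
    have hz := Finset.sum_eq_zero_iff.mp (Nat.le_zero.mp hΦ)
    have hle : ∀ j, t j ≤ imbalance r j := by
      intro j
      have h0 := hz j (Finset.mem_univ j)
      omega
    by_contra hne
    have hlt : t i < imbalance r i := lt_of_le_of_ne (hle i) (fun h => hne h.symm)
    have hcontr : ∑ j, t j < ∑ j, imbalance r j :=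
      Finset.sum_lt_sum (fun j _ => hle j) ⟨i, Finset.mem_univ i, hlt⟩
    rw [hsum, sum_imbalance] at hcontr
    exact lt_irrefl 0 hcontr
  | succ k ih =>
    intro r hr hΦ
    by_cases hdone : ∀ i, imbalance r i = t i
    · exact ⟨r, hr, hdone⟩
    have hU : ∃ u, imbalance r u < t u := by
      by_contra hnoU
      push_neg at hnoU
      push_neg at hdone
      obtain ⟨i, hi⟩ := hdone
      have hlt : t i < imbalance r i := lt_of_le_of_ne (hnoU i) (fun h => hi h.symm)
      have hcontr : ∑ j, t j < ∑ j, imbalance r j :=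
        Finset.sum_lt_sum (fun j _ => hnoU j) ⟨i, Finset.mem_univ i, hlt⟩
      rw [hsum, sum_imbalance] at hcontr
      exact lt_irrefl 0 hcontr
    obtain ⟨u, hu⟩ := hU
    set S : Finset (Fin N) :=
      Finset.univ.filter (fun w => Relation.ReflTransGen (fun a b => r a b = true) w u)
      with hS
    have hu_mem : u ∈ S := by
      simp only [hS, Finset.mem_filter, Finset.mem_univ, true_and]
      exact Relation.ReflTransGen.refl
    have hdom : ∀ s ∈ S, ∀ j, j ∉ S → eterm r s j = 1 := by
      intro s hs j hj
      have hjs : r j s = false := by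
        by_contra hc
        rw [Bool.not_eq_false] at hc
        apply hj
        simp only [hS, Finset.mem_filter, Finset.mem_univ, true_and] at hs ⊢
        exact Relation.ReflTransGen.head hc hs
      have hne : s ≠ j := by rintro rfl; exact hj hs
      have hsj : r s j = true := by
        have h2 := hr.2 s j hne
        rw [h2, hjs]; rfl
      unfold eterm
      rw [hsj, hjs]
      simp
    have hScard : ∑ s ∈ S, imbalance r s = (S.card : ℤ) * ((N : ℤ) - S.card) := by
      have hstep : ∀ s ∈ S, imbalance r s = ∑ j ∈ S, eterm r s j + ∑ j ∈ Sᶜ, eterm r s j := by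
        intro s _
        rw [imbalance_eq_sum, Finset.sum_add_sum_compl]
      rw [Finset.sum_congr rfl hstep, Finset.sum_add_distrib, sum_eterm_square, zero_add]
      have hones : ∀ s ∈ S, ∑ j ∈ Sᶜ, eterm r s j = ∑ j ∈ Sᶜ, (1 : ℤ) := by
        intro s hs
        refine Finset.sum_congr rfl fun j hj => ?_
        exact hdom s hs j (Finset.mem_compl.mp hj)
      rw [Finset.sum_congr rfl hones]
      simp only [Finset.sum_const, nsmul_eq_mul, smul_eq_mul, mul_one, Finset.card_compl,
        Fintype.card_fin]
      have hle : S.card ≤ N := by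
        simpa using Finset.card_le_univ S
      rw [Nat.cast_sub hle]
    have hV : ∃ v ∈ S, t v < imbalance r v := by
      by_contra hnoV
      push_neg at hnoV
      have hlt : ∑ s ∈ S, imbalance r s < ∑ s ∈ S, t s :=
        Finset.sum_lt_sum (fun s hs => hnoV s hs) ⟨u, hu_mem, hu⟩
      have h2 := hcond S
      rw [hScard] at hlt
      linarith
    obtain ⟨v, hvS, hv⟩ := hV
    have hvu : v ≠ u := by rintro rfl; omega
    have hreach : Relation.ReflTransGen (fun a b => r a b = true) v u := by
      have := Finset.mem_filter.mp hvS
      exact this.2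
    obtain ⟨r', hr', himb'⟩ := exists_path_flip hr hreach hvu
    apply ih r' hr'
    have hevv : Even (imbalance r v) := even_imbalance hr hN v
    have hΦ' : ∑ i, (t i - imbalance r' i).toNat < ∑ i, (t i - imbalance r i).toNat := by
      apply Finset.sum_lt_sum
      · intro i _
        have h := himb' i
        by_cases hiu : i = u
        · subst hiu
          rw [h]
          simp only [if_pos rfl, if_neg (Ne.symm hvu)]
          omega
        · by_cases hiv : i = v
          · subst hiv
            rw [h]
            simp only [if_neg hiu, if_pos rfl]
            obtain ⟨c1, hc1⟩ := hevv
            obtain ⟨c2, hc2⟩ := heven i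
            omega
          · rw [h]
            simp only [if_neg hiu, if_neg hiv]
            omega
      · refine ⟨u, Finset.mem_univ u, ?_⟩
        have h1 : imbalance r' u = imbalance r u + 2 := by
          rw [himb' u]
          simp [Ne.symm hvu]
        rw [h1]
        omega
    omega

end TournAux

namespace TournAux

lemma rep_length (l : List ℤ) (k : ℕ) :
    (l.flatMap fun x => List.replicate k x).length = l.length * k := by
  induction l with
  | nil => simp
  | cons a l ih => simp [List.flatMap_cons, ih]; ring

lemma rep_sum (l : List ℤ) (k : ℕ) :
    (l.flatMap fun x => List.replicate k x).sum = (k : ℤ) * l.sum := by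
  induction l with
  | nil => simp
  | cons a l ih =>
    simp [List.flatMap_cons, List.sum_replicate, ih]
    ring

lemma rep_mem {l : List ℤ} {k : ℕ} {a : ℤ} :
    a ∈ (l.flatMap fun x => List.replicate k x) ↔ a ∈ l ∧ k ≠ 0 := by
  simp only [List.mem_flatMap, List.mem_replicate]
  constructor
  · rintro ⟨b, hb, hk, rfl⟩; exact ⟨hb, hk⟩
  · rintro ⟨ha, hk⟩; exact ⟨a, ha, hk, rfl⟩

lemma sum_range_getD (l : List ℤ) :
    ∑ i ∈ Finset.range l.length, l.getD i 0 = l.sum := by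
  induction l with
  | nil => simp
  | cons a l ih =>
    rw [List.length_cons, Finset.sum_range_succ']
    simp only [List.getD_cons_succ, List.getD_cons_zero, List.sum_cons]
    rw [ih]; ring

end TournAux


open TournAux in
/-- If some `x_p ∈ X` equals `y_q + y_r` with `-y_q, -y_r ∈ Y`, then
there is a tournament of order `n + 3` with imbalance set `X ∪ Y`. -/
theorem even_tournament_of_x_eq_add (X Y : Finset ℤ)
    (hXne : X.Nonempty) (hYne : Y.Nonempty) (hdisj : Disjoint X Y)
    (hX : ∀ x ∈ X, 0 ≤ x ∧ Even x) (hY : ∀ y ∈ Y, y < 0 ∧ Even y)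
    (hXY : X ∪ Y ≠ {0})
    (L M : ℤ) (hL : L = ∑ x ∈ X, x) (hM : M = ∑ y ∈ Y, -y)
    (n : ℕ) (hn : (n : ℤ) = X.card * M + Y.card * L)
    (h : ∃ xp ∈ X, ∃ yq yr : ℤ, -yq ∈ Y ∧ -yr ∈ Y ∧ xp = yq + yr) :
    ∃ r : Fin (n + 3) → Fin (n + 3) → Bool,
      IsTournament r ∧ imbalanceSet r = X ∪ Y := by
  classical
  obtain ⟨xp, hxp, yq, yr, hyqY, hyrY, hxeq⟩ := h
  -- basic positivity facts
  have hyq1 : 1 ≤ yq := by have := (hY _ hyqY).1; omega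
  have hyr1 : 1 ≤ yr := by have := (hY _ hyrY).1; omega
  have hLx : ∀ x ∈ X, x ≤ L := by
    intro x hx
    rw [hL]
    exact Finset.single_le_sum (fun z hz => (hX z hz).1) hx
  have hMy : ∀ y ∈ Y, -y ≤ M := by
    intro y hy
    rw [hM]
    exact Finset.single_le_sum (f := fun z => -z) (fun z hz => neg_nonneg.mpr (le_of_lt (hY z hz).1)) hy
  have hL0 : 0 ≤ L := by
    rw [hL]; exact Finset.sum_nonneg (fun z hz => (hX z hz).1)
  have hM0 : 0 ≤ M := by
    rw [hM]; exact Finset.sum_nonneg (fun z hz => neg_nonneg.mpr (le_of_lt (hY z hz).1))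
  have hLpos : 2 ≤ L := by
    have := hLx xp hxp; omega
  have hMpos : 1 ≤ M := by
    obtain ⟨y, hy⟩ := hYne
    have h1 := hMy y hy
    have h2 := (hY y hy).1
    omega
  have hXc : 1 ≤ X.card := Finset.card_pos.mpr hXne
  have hYc : 1 ≤ Y.card := Finset.card_pos.mpr hYne
  -- the list of target imbalances
  set lst : List ℤ :=
    (X.toList.flatMap fun x => List.replicate M.toNat x) ++
      ((Y.toList.flatMap fun y => List.replicate L.toNat y) ++ [xp, -yq, -yr]) with hlst
  have hXsum : X.toList.sum = L := by
    rw [hL, ← Finset.sum_map_toList X (fun x => x), List.map_id']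
  have hYsum : Y.toList.sum = -M := by
    have : M = -∑ y ∈ Y, y := by rw [hM, Finset.sum_neg_distrib]
    rw [← Finset.sum_map_toList Y (fun y => y), List.map_id'] at this
    omega
  have hlen : lst.length = n + 3 := by
    rw [hlst]
    simp only [List.length_append, rep_length, Finset.length_toList, List.length_cons,
      List.length_nil]
    have : (n : ℤ) = (X.card * M.toNat + Y.card * L.toNat : ℕ) := by
      push_cast [Int.toNat_of_nonneg hM0, Int.toNat_of_nonneg hL0]
      exact hn
    omega
  have hsum0 : lst.sum = 0 := by
    rw [hlst]
    simp only [List.sum_append, rep_sum, hXsum, hYsum, List.sum_cons, List.sum_nil]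
    rw [Int.toNat_of_nonneg hM0, Int.toNat_of_nonneg hL0]
    have : xp + (-yq + (-yr + 0)) = 0 := by omega
    rw [this]
    ring
  have hmem_lst : ∀ a ∈ lst, a ∈ X ∪ Y := by
    intro a ha
    rw [hlst] at ha
    simp only [List.mem_append, rep_mem, Finset.mem_toList, List.mem_cons,
      List.mem_singleton, List.not_mem_nil] at ha
    rcases ha with ⟨haX, _⟩ | (⟨haY, _⟩ | (rfl | (rfl | (rfl | hfalse))))
    · exact Finset.mem_union_left _ haX
    · exact Finset.mem_union_right _ haY
    · exact Finset.mem_union_left _ hxp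
    · exact Finset.mem_union_right _ hyqY
    · exact Finset.mem_union_right _ hyrY
    · exact absurd hfalse (by simp)
  have hmem_lst' : ∀ a ∈ X ∪ Y, a ∈ lst := by
    intro a ha
    rw [hlst]
    simp only [List.mem_append, rep_mem, Finset.mem_toList, List.mem_cons]
    rcases Finset.mem_union.mp ha with haX | haY
    · exact Or.inl ⟨haX, by omega⟩
    · exact Or.inr (Or.inl ⟨haY, by omega⟩)
  -- the target function
  set t : Fin (n + 3) → ℤ := fun i => lst.getD i.val 0 with ht
  have htmem : ∀ i, t i ∈ X ∪ Y := by
    intro i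
    apply hmem_lst
    rw [ht]
    simp only []
    rw [List.getD_eq_getElem lst 0 (by rw [hlen]; exact i.isLt)]
    exact List.getElem_mem _
  have htsum : ∑ i, t i = 0 := by
    rw [ht]
    rw [Fin.sum_univ_eq_sum_range (fun i => lst.getD i 0) (n + 3)]
    rw [← hlen, sum_range_getD, hsum0]
  have hteven : ∀ i, Even (t i) := by
    intro i
    rcases Finset.mem_union.mp (htmem i) with hx | hy
    · exact (hX _ hx).2
    · exact (hY _ hy).2
  have htle : ∀ i, t i ≤ L := by
    intro i
    rcases Finset.mem_union.mp (htmem i) with hx | hy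
    · exact hLx _ hx
    · linarith [(hY _ hy).1]
  have htge : ∀ i, -M ≤ t i := by
    intro i
    rcases Finset.mem_union.mp (htmem i) with hx | hy
    · linarith [(hX _ hx).1]
    · linarith [hMy _ hy]
  have hLM : L + M ≤ (n : ℤ) := by
    rw [hn]
    have h1 : (1 : ℤ) ≤ X.card := by exact_mod_cast hXc
    have h2 : (1 : ℤ) ≤ Y.card := by exact_mod_cast hYc
    nlinarith
  have hcond : ∀ S : Finset (Fin (n + 3)),
      ∑ i ∈ S, t i ≤ (S.card : ℤ) * (((n + 3 : ℕ) : ℤ) - S.card) := by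
    intro S
    have hkN : S.card ≤ n + 3 := by
      simpa using Finset.card_le_univ S
    by_cases hc1 : L ≤ ((n + 3 : ℕ) : ℤ) - S.card
    · calc ∑ i ∈ S, t i ≤ ∑ _i ∈ S, L := Finset.sum_le_sum (fun i _ => htle i)
        _ = (S.card : ℤ) * L := by rw [Finset.sum_const, nsmul_eq_mul]
        _ ≤ (S.card : ℤ) * (((n + 3 : ℕ) : ℤ) - S.card) := by
            apply mul_le_mul_of_nonneg_left hc1
            positivity
    · by_cases hc2 : M ≤ (S.card : ℤ)
      · have hsplit : ∑ i ∈ S, t i + ∑ i ∈ Sᶜ, t i = 0 := by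
          rw [Finset.sum_add_sum_compl, htsum]
        have hb : -∑ i ∈ Sᶜ, t i ≤ (Sᶜ.card : ℤ) * M := by
          have : ∑ i ∈ Sᶜ, (-M) ≤ ∑ i ∈ Sᶜ, t i := Finset.sum_le_sum (fun i _ => htge i)
          rw [Finset.sum_const, nsmul_eq_mul] at this
          linarith
        have hcc : (Sᶜ.card : ℤ) = ((n + 3 : ℕ) : ℤ) - S.card := by
          rw [Finset.card_compl]
          simp only [Fintype.card_fin]
          push_cast [Nat.cast_sub hkN]
          ring
        have hnn : (0 : ℤ) ≤ ((n + 3 : ℕ) : ℤ) - S.card := by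
          rw [← hcc]; positivity
        calc ∑ i ∈ S, t i = -∑ i ∈ Sᶜ, t i := by linarith
          _ ≤ (Sᶜ.card : ℤ) * M := hb
          _ = (((n + 3 : ℕ) : ℤ) - S.card) * M := by rw [hcc]
          _ ≤ (((n + 3 : ℕ) : ℤ) - S.card) * S.card := by
              apply mul_le_mul_of_nonneg_left hc2 hnn
          _ = (S.card : ℤ) * (((n + 3 : ℕ) : ℤ) - S.card) := by ring
      · exfalso
        push_neg at hc1 hc2
        have : ((n + 3 : ℕ) : ℤ) < L + M := by
          have hk : (S.card : ℤ) ≤ (n + 3 : ℕ) := by exact_mod_cast hkN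
          linarith
        push_cast at this
        linarith
  have hodd3 : Odd (n + 3) := by
    have hME : Even M := by
      rw [hM]
      apply Finset.even_sum
      intro y hy
      exact (hY y hy).2.neg
    have hLE : Even L := by
      rw [hL]
      apply Finset.even_sum
      intro x hx
      exact (hX x hx).2
    have hnE : Even (n : ℤ) := by
      rw [hn]
      obtain ⟨a, haa⟩ := hME
      obtain ⟨b, hbb⟩ := hLE
      exact ⟨X.card * a + Y.card * b, by rw [haa, hbb]; ring⟩
    have : Even n := by exact_mod_cast hnE
    obtain ⟨c, hc⟩ := this
    exact ⟨n / 2 + 1, by omega⟩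
  obtain ⟨r, hr, himb⟩ := realize hodd3 t hteven htsum hcond
  refine ⟨r, hr, ?_⟩
  unfold imbalanceSet
  ext a
  simp only [Finset.mem_image, Finset.mem_univ, true_and]
  constructor
  · rintro ⟨i, rfl⟩
    rw [himb i]
    exact htmem i
  · intro ha
    have halst := hmem_lst' a ha
    obtain ⟨j, hj, hget⟩ := List.mem_iff_getElem.mp halst
    refine ⟨⟨j, by rw [← hlen]; exact hj⟩, ?_⟩
    rw [himb]
    rw [ht]
    simp only []
    rw [List.getD_eq_getElem lst 0 hj]
    exact hget
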